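/- Let u_1 ≥ u_2 ≥ ... ≥ u_M ≥ 0 be the (uniform) values of M indivisible goods and c_1 ≥ c_2 ≥ ... ≥ c_n > 0 the utility caps of n agents. Suppose integers h ≥ 0 and k ≥ 0 satisfy h < n−k, and set δ = (Σ_{j=h+1}^M u_j − Σ_{i=n−k+1}^n c_i)/(n−h−k); assume c_{n−k+1} ≤ δ < c_{n−k} and δ < u_h. Then for every integral allocation x of the M goods to the n agents, (∏_i min(c_i, v(x_i)))^{1/n} ≤ (∏_{i=1}^h min(c_i,u_i) · δ^{n−h−k} · ∏_{i=n−k+1}^n c_i)^{1/n}, where v(x_i) = Σ_{j∈x_i} u_j. -/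

import Mathlib

open Finset

/-- auxiliary: if `∑ s i / ρ i ≤ card`, `s ≥ 0`, `ρ > 0`, then `∏ s ≤ ∏ ρ`. -/
private lemma prod_le_prod_of_sum_div_le {ι : Type*} (t : Finset ι) (s ρ : ι → ℝ)
    (hs : ∀ i ∈ t, 0 ≤ s i) (hρ : ∀ i ∈ t, 0 < ρ i)
    (hsum : ∑ i ∈ t, s i / ρ i ≤ (t.card : ℝ)) :
    ∏ i ∈ t, s i ≤ ∏ i ∈ t, ρ i := by
  have h1 : ∀ i ∈ t, s i ≤ ρ i * Real.exp (s i / ρ i - 1) := by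
    intro i hi
    have hρi := hρ i hi
    have h0 := Real.add_one_le_exp (s i / ρ i - 1)
    have h2 : s i / ρ i ≤ Real.exp (s i / ρ i - 1) := by linarith
    calc s i = ρ i * (s i / ρ i) := by field_simp
      _ ≤ ρ i * Real.exp (s i / ρ i - 1) := mul_le_mul_of_nonneg_left h2 hρi.le
  calc ∏ i ∈ t, s i ≤ ∏ i ∈ t, ρ i * Real.exp (s i / ρ i - 1) :=
        Finset.prod_le_prod hs h1
    _ = (∏ i ∈ t, ρ i) * Real.exp (∑ i ∈ t, (s i / ρ i - 1)) := by
        rw [Finset.prod_mul_distrib, Real.exp_sum]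
    _ ≤ (∏ i ∈ t, ρ i) * 1 := by
        refine mul_le_mul_of_nonneg_left ?_ (Finset.prod_nonneg fun i hi => (hρ i hi).le)
        rw [Real.exp_le_one_iff, Finset.sum_sub_distrib, Finset.sum_const, nsmul_eq_mul,
          mul_one, sub_nonpos]
        exact hsum
    _ = _ := mul_one _

/-- auxiliary: a finset of naturals with more than `r` elements has an element `≥ r`. -/
private lemma exists_le_of_card_lt (S : Finset ℕ) (r : ℕ) (hr : r < S.card) :
    ∃ a ∈ S, r ≤ a := by
  by_contra hcon
  push_neg at hcon
  have : S ⊆ Finset.range r := fun a ha => Finset.mem_range.mpr (hcon a ha)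
  have := Finset.card_le_card this
  simp [Finset.card_range] at this
  omega

private lemma card_filter_val_lt (n t : ℕ) (h : t ≤ n) :
    ((univ : Finset (Fin n)).filter fun i : Fin n => (i : ℕ) < t).card = t := by
  have := Finset.card_bij' (s := (univ : Finset (Fin n)).filter fun i : Fin n => (i : ℕ) < t)
    (t := Finset.range t) (fun i _ => (i : ℕ))
    (fun a ha => Fin.mk a (lt_of_lt_of_le (Finset.mem_range.mp ha) h)) ?_ ?_ ?_ ?_
  · rwa [Finset.card_range] at this
  · intro a ha
    simp only [Finset.mem_filter] at ha
    exact Finset.mem_range.mpr ha.2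
  · intro a ha
    simp only [Finset.mem_filter, Finset.mem_univ, true_and]
    exact Finset.mem_range.mp ha
  · intro a _; rfl
  · intro a _; rfl

theorem optimal_allocation_upper_bound (n M h k : ℕ) (hn : 0 < n)
    (u : ℕ → ℝ) (c : ℕ → ℝ)
    (hu_mono : ∀ j j', j ≤ j' → u j' ≤ u j) (hu_nonneg : ∀ j, 0 ≤ u j)
    (hc_mono : ∀ i i', i ≤ i' → c i' ≤ c i) (hc_pos : ∀ i, i < n → 0 < c i)
    (hhk : h + k < n) (hhM : h ≤ M)
    (δ : ℝ)
    (hδ : δ = ((∑ j ∈ Finset.Ico h M, u j) - ∑ i ∈ Finset.Ico (n - k) n, c i) /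
      ((n - h - k : ℕ) : ℝ))
    (hδc₁ : 0 < k → c (n - k) ≤ δ)
    (hδc₂ : δ < c (n - k - 1))
    (hδu : 0 < h → δ < u (h - 1)) :
    ∀ x : Fin M → Fin n,
      (∏ i : Fin n, min (c i)
          (∑ j ∈ univ.filter (fun j => x j = i), u (j : ℕ))) ^ (1 / (n : ℝ)) ≤
        ((∏ i ∈ Finset.range h, min (c i) (u i)) * δ ^ (n - h - k) *
            ∏ i ∈ Finset.Ico (n - k) n, c i) ^ (1 / (n : ℝ)) := by
  intro x
  set V : Fin n → ℝ := fun i => ∑ j ∈ univ.filter (fun j => x j = i), u (j : ℕ) with hVdef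
  set s : Fin n → ℝ := fun i => min (c i) (V i) with hsdef
  have hV_nonneg : ∀ i, 0 ≤ V i := fun i =>
    Finset.sum_nonneg fun j _ => hu_nonneg _
  have hs_nonneg : ∀ i : Fin n, 0 ≤ s i := fun i =>
    le_min (hc_pos i i.isLt).le (hV_nonneg i)
  have hmne : n - h - k ≠ 0 := by omega
  -- main product inequality
  have key : (∏ i : Fin n, s i) ≤
      (∏ i ∈ Finset.range h, min (c i) (u i)) * δ ^ (n - h - k) *
        ∏ i ∈ Finset.Ico (n - k) n, c i := by
    have hδ0 : 0 ≤ δ := by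
      rcases Nat.eq_zero_or_pos k with hk | hk
      · rw [hδ, hk]
        simp only [Nat.sub_zero, Finset.Ico_self, Finset.sum_empty, sub_zero]
        apply div_nonneg (Finset.sum_nonneg fun j _ => hu_nonneg j) (Nat.cast_nonneg _)
      · exact le_trans (hc_pos _ (by omega)).le (hδc₁ hk)
    rcases eq_or_lt_of_le hδ0 with hδz | hδpos
    · -- degenerate case δ = 0
      have hk0 : k = 0 := by
        by_contra hk
        have := hδc₁ (Nat.pos_of_ne_zero hk)
        have := hc_pos (n - k) (by omega)
        linarith [hδz]
      have hT0 : ∑ j ∈ Finset.Ico h M, u j = 0 := by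
        rw [hδ, hk0] at hδz
        simp only [Nat.sub_zero, Finset.Ico_self, Finset.sum_empty, sub_zero] at hδz
        rcases div_eq_zero_iff.mp hδz.symm with h1 | h2
        · exact h1
        · exact absurd h2 (Nat.cast_ne_zero.mpr (by omega : n - h ≠ 0))
      have hTz : ∀ j, h ≤ j → j < M → u j = 0 := by
        intro j hj1 hj2
        exact (Finset.sum_eq_zero_iff_of_nonneg (fun j _ => hu_nonneg j)).mp hT0 j
          (Finset.mem_Ico.mpr ⟨hj1, hj2⟩)
      -- find an agent receiving no good of index < h
      have hImg : ((univ.filter (fun j : Fin M => (j : ℕ) < h)).image x).card < n := by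
        calc ((univ.filter (fun j : Fin M => (j : ℕ) < h)).image x).card
            ≤ (univ.filter (fun j : Fin M => (j : ℕ) < h)).card := Finset.card_image_le
          _ = h := card_filter_val_lt M h hhM
          _ < n := by omega
      have hneu : ((univ.filter (fun j : Fin M => (j : ℕ) < h)).image x) ≠ univ := by
        intro hEq
        rw [hEq, Finset.card_univ, Fintype.card_fin] at hImg; omega
      obtain ⟨i0, _, hi0⟩ := Finset.exists_of_ssubset (Finset.ssubset_univ_iff.mpr hneu)
      have hVi0 : V i0 = 0 := by
        apply Finset.sum_eq_zero
        intro j hj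
        simp only [Finset.mem_filter, Finset.mem_univ, true_and] at hj
        have hjh : ¬ ((j : ℕ) < h) := by
          intro hlt
          exact hi0 (Finset.mem_image.mpr ⟨j, Finset.mem_filter.mpr ⟨Finset.mem_univ _, hlt⟩, hj⟩)
        exact hTz j (le_of_not_gt hjh) j.isLt
      have hLHS : (∏ i : Fin n, s i) = 0 := by
        apply Finset.prod_eq_zero (Finset.mem_univ i0)
        simp only [hsdef, hVi0, min_eq_right (hc_pos i0 i0.isLt).le]
      rw [hLHS, ← hδz, zero_pow hmne, mul_zero, zero_mul]
    · -- main case δ > 0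
      classical
      set P : Fin n → Finset (Fin M) := fun i => univ.filter (fun j => x j = i) with hPdef
      set Lg : Fin n → Finset (Fin M) := fun i => (P i).filter (fun j => (j : ℕ) < h) with hLgdef
      set Sm : Fin n → Finset (Fin M) := fun i => (P i).filter (fun j => ¬ (j : ℕ) < h) with hSmdef
      set w : ℕ → ℝ := fun a => min (c a) (u a) with hwdef
      set q : Fin n → ℝ := fun i =>
        if hne : (Lg i).Nonempty then min (c i) (u (((Lg i).min' hne : Fin M) : ℕ)) else 0 with hqdef
      set kk : Fin n → ℝ ×ₗ ℕ := fun i => toLex (-(q i), (i : ℕ)) with hkkdef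
      set H' : Finset (Fin n) :=
        (univ.filter (fun i : Fin n => ¬ (n - k ≤ (i : ℕ)))).filter
          (fun i => (Lg i).Nonempty) with hH'def
      set φ : Fin n → ℕ := fun i => (H'.filter (fun a => kk a < kk i)).card with hφdef
      set ρ : Fin n → ℝ := fun i =>
        if n - k ≤ (i : ℕ) then c i
        else if (Lg i).Nonempty then w (φ i) else δ with hρdef
      -- membership facts
      have hLgmem : ∀ i : Fin n, ∀ j ∈ Lg i, x j = i ∧ (j : ℕ) < h := by
        intro i j hj
        simp only [hLgdef, hPdef, Finset.mem_filter, Finset.mem_univ, true_and] at hj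
        exact hj
      have hH'mem : ∀ i : Fin n, i ∈ H' ↔ ((i : ℕ) < n - k ∧ (Lg i).Nonempty) := by
        intro i
        simp only [hH'def, Finset.mem_filter, Finset.mem_univ, true_and, not_le]
      have hq_le_c : ∀ i : Fin n, q i ≤ c i := by
        intro i
        simp only [hqdef]
        split
        · exact min_le_left _ _
        · exact (hc_pos i i.isLt).le
      have hq_nonneg : ∀ i : Fin n, 0 ≤ q i := by
        intro i
        simp only [hqdef]
        split
        · exact le_min (hc_pos i i.isLt).le (hu_nonneg _)
        · exact le_rfl
      have hwδ : ∀ j, j < h → δ < w j := by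
        intro j hj
        refine lt_min ?_ ?_
        · exact lt_of_lt_of_le hδc₂ (hc_mono j (n - k - 1) (by omega))
        · exact lt_of_lt_of_le (hδu (by omega)) (hu_mono j (h - 1) (by omega))
      -- domination: the rank of each holder points to a large-enough row
      have hdom : ∀ i ∈ H', φ i < h ∧ q i ≤ w (φ i) := by
        intro i hiH
        set S : Finset (Fin n) := insert i (H'.filter (fun a => kk a < kk i)) with hSdef
        have hnotmem : i ∉ H'.filter (fun a => kk a < kk i) := by
          simp only [Finset.mem_filter]
          rintro ⟨-, hlt⟩
          exact lt_irrefl _ hlt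
        have hScard : S.card = φ i + 1 := by
          rw [hSdef, Finset.card_insert_of_notMem hnotmem, hφdef]
        have hSsub : S ⊆ H' := Finset.insert_subset hiH (Finset.filter_subset _ _)
        have hSq : ∀ a ∈ S, q i ≤ q a := by
          intro a ha
          rcases Finset.mem_insert.mp ha with rfl | ha
          · exact le_rfl
          · have hlt : kk a < kk i := (Finset.mem_filter.mp ha).2
            rw [hkkdef] at hlt
            rcases (Prod.Lex.lt_iff).mp hlt with h1 | h2
            · exact (neg_lt_neg_iff.mp h1).le
            · exact (neg_injective h2.1).ge
        have hSne : ∀ a ∈ S, (Lg a).Nonempty := fun a ha => ((hH'mem a).mp (hSsub ha)).2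
        set F : Fin n → ℕ := fun a =>
          if hne : (Lg a).Nonempty then (((Lg a).min' hne : Fin M) : ℕ) else 0 with hFdef
        have hFmem : ∀ a ∈ S, ∃ j0 ∈ Lg a, (j0 : ℕ) = F a := by
          intro a ha
          have hne := hSne a ha
          exact ⟨(Lg a).min' hne, Finset.min'_mem _ _, by
            simp only [hFdef]; rw [dif_pos hne]⟩
        have hFh : ∀ a ∈ S, F a < h := by
          intro a ha
          obtain ⟨j0, hj0, hj0e⟩ := hFmem a ha
          rw [← hj0e]; exact (hLgmem a j0 hj0).2
        have hFinj : ∀ a ∈ S, ∀ b ∈ S, F a = F b → a = b := by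
          intro a ha b hb hab
          obtain ⟨ja, hja, hjae⟩ := hFmem a ha
          obtain ⟨jb, hjb, hjbe⟩ := hFmem b hb
          have hjab : ja = jb := Fin.val_injective (by rw [hjae, hjbe, hab])
          rw [← (hLgmem a ja hja).1, ← (hLgmem b jb hjb).1, hjab]
        have hcardh : φ i + 1 ≤ h := by
          rw [← hScard, ← Finset.card_range h]
          exact Finset.card_le_card_of_injOn F
            (fun a ha => Finset.mem_range.mpr (hFh a ha))
            (fun a ha b hb hab =>
              hFinj a (Finset.mem_coe.mp ha) b (Finset.mem_coe.mp hb) hab)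
        have hqF : ∀ a ∈ S, q a ≤ u (F a) := by
          intro a ha
          have hne := hSne a ha
          simp only [hqdef, hFdef]
          rw [dif_pos hne, dif_pos hne]
          exact min_le_right _ _
        have hu_dom : q i ≤ u (φ i) := by
          obtain ⟨j0, hj0T, hj0ge⟩ := exists_le_of_card_lt (S.image F) (φ i) (by
            rw [Finset.card_image_of_injOn (fun a ha b hb hab =>
              hFinj a (Finset.mem_coe.mp ha) b (Finset.mem_coe.mp hb) hab), hScard]
            omega)
          obtain ⟨a, haS, hFa⟩ := Finset.mem_image.mp hj0T
          calc q i ≤ q a := hSq a haS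
            _ ≤ u (F a) := hqF a haS
            _ = u j0 := by rw [hFa]
            _ ≤ u (φ i) := hu_mono (φ i) j0 hj0ge
        have hc_dom : q i ≤ c (φ i) := by
          obtain ⟨a0, ha0T, ha0ge⟩ := exists_le_of_card_lt
            (S.image (fun a : Fin n => (a : ℕ))) (φ i) (by
              rw [Finset.card_image_of_injOn (fun a _ b _ hab => Fin.val_injective hab),
                hScard]
              omega)
          obtain ⟨a, haS, hFa⟩ := Finset.mem_image.mp ha0T
          calc q i ≤ q a := hSq a haS
            _ ≤ c a := hq_le_c a
            _ = c a0 := by rw [← hFa]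
            _ ≤ c (φ i) := hc_mono (φ i) a0 ha0ge
        exact ⟨by omega, le_min hc_dom hu_dom⟩
      -- rank is injective on holders
      have hφinj : ∀ a ∈ H', ∀ b ∈ H', φ a = φ b → a = b := by
        have hmono : ∀ a ∈ H', ∀ b ∈ H', kk a < kk b → φ a < φ b := by
          intro a ha b hb hab
          have hsub : insert a (H'.filter (fun y => kk y < kk a)) ⊆
              H'.filter (fun y => kk y < kk b) := by
            intro y hy
            rcases Finset.mem_insert.mp hy with rfl | hy
            · exact Finset.mem_filter.mpr ⟨ha, hab⟩
            · obtain ⟨hy1, hy2⟩ := Finset.mem_filter.mp hy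
              exact Finset.mem_filter.mpr ⟨hy1, lt_trans hy2 hab⟩
          have hnm : a ∉ H'.filter (fun y => kk y < kk a) := by
            simp only [Finset.mem_filter]
            rintro ⟨-, hlt⟩
            exact lt_irrefl _ hlt
          have := Finset.card_le_card hsub
          rw [Finset.card_insert_of_notMem hnm] at this
          simp only [hφdef]
          omega
        intro a ha b hb hab
        by_contra hne
        have hkkne : kk a ≠ kk b := by
          intro hEq
          apply hne
          have := congrArg (fun z : ℝ ×ₗ ℕ => (ofLex z).2) hEq
          exact Fin.val_injective this
        rcases lt_or_gt_of_ne hkkne with hlt | hlt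
        · exact absurd hab (Nat.ne_of_lt (hmono a ha b hb hlt))
        · exact absurd hab.symm (Nat.ne_of_lt (hmono b hb a ha hlt))
      -- per-agent certified bound
      have hρpos : ∀ i : Fin n, 0 < ρ i := by
        intro i
        simp only [hρdef]
        split_ifs with h1 h2
        · exact hc_pos i i.isLt
        · have hiH : i ∈ H' := (hH'mem i).mpr ⟨not_le.mp h1, h2⟩
          exact lt_trans hδpos (hwδ _ (hdom i hiH).1)
        · exact hδpos
      have hpb : ∀ i : Fin n, s i / ρ i ≤
          (if n - k ≤ (i : ℕ) then 1 - c i / δ else 0) +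
            ∑ j ∈ P i, (if (j : ℕ) < h then (1:ℝ) else u (j : ℕ) / δ) := by
        intro i
        set e : ℝ := ∑ j ∈ Sm i, u (j : ℕ) with hedef
        have he0 : 0 ≤ e := Finset.sum_nonneg fun j _ => hu_nonneg _
        have hVsplit : V i = (∑ j ∈ Lg i, u (j : ℕ)) + e := by
          rw [hVdef, hedef, hLgdef, hSmdef]
          exact (Finset.sum_filter_add_sum_filter_not (P i) (fun j => (j : ℕ) < h) _).symm
        have hgsplit : ∑ j ∈ P i, (if (j : ℕ) < h then (1:ℝ) else u (j : ℕ) / δ)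
            = ((Lg i).card : ℝ) + e / δ := by
          rw [← Finset.sum_filter_add_sum_filter_not (P i) (fun j => (j : ℕ) < h)]
          congr 1
          · calc ∑ j ∈ (P i).filter (fun j : Fin M => (j : ℕ) < h),
                  (if (j : ℕ) < h then (1:ℝ) else u (j : ℕ) / δ)
                = ∑ _j ∈ Lg i, (1:ℝ) := Finset.sum_congr rfl
                    (fun j hj => if_pos (hLgmem i j hj).2)
              _ = ((Lg i).card : ℝ) := by rw [Finset.sum_const, nsmul_eq_mul, mul_one]
          · calc ∑ j ∈ (P i).filter (fun j : Fin M => ¬ (j : ℕ) < h),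
                  (if (j : ℕ) < h then (1:ℝ) else u (j : ℕ) / δ)
                = ∑ j ∈ Sm i, u (j : ℕ) / δ := Finset.sum_congr rfl
                    (fun j hj => if_neg (Finset.mem_filter.mp hj).2)
              _ = e / δ := (Finset.sum_div _ _ _).symm
        have hci : 0 < c i := hc_pos i i.isLt
        by_cases hK : n - k ≤ (i : ℕ)
        · have hkpos : 0 < k := by have := i.isLt; omega
          have hciδ : c i ≤ δ := le_trans (hc_mono (n - k) i hK) (hδc₁ hkpos)
          have hρi : ρ i = c i := by simp only [hρdef]; rw [if_pos hK]
          rw [hρi, if_pos hK, hgsplit]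
          by_cases hne : (Lg i).Nonempty
          · have hcard1 : (1:ℝ) ≤ ((Lg i).card : ℝ) := by
              exact_mod_cast Finset.card_pos.mpr hne
            have hsle : s i / c i ≤ 1 := div_le_one_of_le₀ (min_le_left _ _) hci.le
            have hcd : c i / δ ≤ 1 := div_le_one_of_le₀ hciδ hδpos.le
            have heδ : 0 ≤ e / δ := div_nonneg he0 hδpos.le
            linarith
          · have hVe : V i = e := by
              rw [hVsplit, Finset.not_nonempty_iff_eq_empty.mp hne, Finset.sum_empty,
                zero_add]
            have hcard0 : ((Lg i).card : ℝ) = 0 := by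
              rw [Finset.not_nonempty_iff_eq_empty.mp hne]; simp
            rw [hcard0]
            have hre : 1 - c i / δ + (0 + e / δ) = (δ - c i + e) / δ := by
              field_simp
              ring
            rw [hre, div_le_div_iff₀ hci hδpos]
            have hsi : s i = min (c i) e := by rw [hsdef]; dsimp only; rw [hVe]
            rcases le_total (c i) e with hce | hce
            · rw [hsi, min_eq_left hce]
              nlinarith
            · rw [hsi, min_eq_right hce]
              nlinarith [mul_nonneg (sub_nonneg.mpr hce) (sub_nonneg.mpr hciδ)]
        · have hnKr : ρ i = if (Lg i).Nonempty then w (φ i) else δ := by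
            simp only [hρdef]; rw [if_neg hK]
          rw [if_neg hK, hgsplit]
          by_cases hne : (Lg i).Nonempty
          · have hiH : i ∈ H' := (hH'mem i).mpr ⟨not_le.mp hK, hne⟩
            obtain ⟨hφh, hqw⟩ := hdom i hiH
            have hδw : δ < w (φ i) := hwδ _ hφh
            have hρi : ρ i = w (φ i) := by rw [hnKr, if_pos hne]
            have hwpos : 0 < w (φ i) := lt_trans hδpos hδw
            have hcard1 : (1:ℝ) ≤ ((Lg i).card : ℝ) := by
              exact_mod_cast Finset.card_pos.mpr hne
            have heδ : 0 ≤ e / δ := div_nonneg he0 hδpos.le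
            rw [hρi]
            by_cases hcu : c i ≤ u (((Lg i).min' hne : Fin M) : ℕ)
            · have hqi : q i = c i := by
                simp only [hqdef]; rw [dif_pos hne, min_eq_left hcu]
              have hsw : s i ≤ w (φ i) :=
                le_trans (min_le_left _ _) (by rw [← hqi]; exact hqw)
              have h1 : s i / w (φ i) ≤ 1 := div_le_one_of_le₀ hsw hwpos.le
              linarith
            · push_neg at hcu
              have hqi : q i = u (((Lg i).min' hne : Fin M) : ℕ) := by
                simp only [hqdef]; rw [dif_pos hne, min_eq_right hcu.le]
              have hsumLg : ∑ j ∈ Lg i, u (j : ℕ) ≤ ((Lg i).card : ℝ) * q i := by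
                rw [hqi]
                calc ∑ j ∈ Lg i, u (j : ℕ)
                    ≤ ∑ _j ∈ Lg i, u (((Lg i).min' hne : Fin M) : ℕ) := by
                      refine Finset.sum_le_sum fun j hj => hu_mono _ _ ?_
                      exact Fin.le_def.mp (Finset.min'_le (Lg i) j hj)
                  _ = _ := by rw [Finset.sum_const, nsmul_eq_mul]
              have hcw := mul_le_mul_of_nonneg_left hqw
                (Nat.cast_nonneg (Lg i).card : (0:ℝ) ≤ ((Lg i).card : ℝ))
              have hVle : V i ≤ ((Lg i).card : ℝ) * w (φ i) + e := by
                rw [hVsplit]; linarith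
              have hsV : s i ≤ V i := min_le_right _ _
              calc s i / w (φ i)
                  ≤ (((Lg i).card : ℝ) * w (φ i) + e) / w (φ i) :=
                    (div_le_div_iff_of_pos_right hwpos).mpr (le_trans hsV hVle)
                _ = ((Lg i).card : ℝ) + e / w (φ i) := by
                    rw [add_div, mul_div_assoc, div_self hwpos.ne', mul_one]
                _ ≤ ((Lg i).card : ℝ) + e / δ := by
                    have := div_le_div_of_nonneg_left he0 hδpos hδw.le
                    linarith
                _ ≤ 0 + (((Lg i).card : ℝ) + e / δ) := by linarith
          · have hρi : ρ i = δ := by rw [hnKr, if_neg hne]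
            have hVe : V i = e := by
              rw [hVsplit, Finset.not_nonempty_iff_eq_empty.mp hne, Finset.sum_empty,
                zero_add]
            have hcard0 : ((Lg i).card : ℝ) = 0 := by
              rw [Finset.not_nonempty_iff_eq_empty.mp hne]; simp
            rw [hρi, hcard0]
            have hse : s i ≤ e := by
              rw [hsdef]; dsimp only; rw [hVe]; exact min_le_right _ _
            have h2 : s i / δ ≤ e / δ := (div_le_div_iff_of_pos_right hδpos).mpr hse
            linarith
      -- summing the bounds
      have hsum : ∑ i : Fin n, s i / ρ i ≤ (n : ℝ) := by
        have h1 : ∑ i : Fin n, s i / ρ i ≤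
            (∑ i : Fin n, (if n - k ≤ (i : ℕ) then 1 - c i / δ else 0)) +
              ∑ i : Fin n, ∑ j ∈ P i, (if (j : ℕ) < h then (1:ℝ) else u (j : ℕ) / δ) := by
          rw [← Finset.sum_add_distrib]
          exact Finset.sum_le_sum fun i _ => hpb i
        have h2 : ∑ i : Fin n, ∑ j ∈ P i, (if (j : ℕ) < h then (1:ℝ) else u (j : ℕ) / δ)
            = ∑ j : Fin M, (if (j : ℕ) < h then (1:ℝ) else u (j : ℕ) / δ) :=
          Finset.sum_fiberwise_of_maps_to (fun j _ => Finset.mem_univ (x j)) _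
        have h3 : ∑ j : Fin M, (if (j : ℕ) < h then (1:ℝ) else u (j : ℕ) / δ)
            = (h : ℝ) + (∑ j ∈ Finset.Ico h M, u j) / δ := by
          rw [Fin.sum_univ_eq_sum_range (fun a => if a < h then (1:ℝ) else u a / δ) M]
          rw [Finset.range_eq_Ico, ← Finset.sum_Ico_consecutive _ (Nat.zero_le h) hhM]
          congr 1
          · calc ∑ a ∈ Finset.Ico 0 h, (if a < h then (1:ℝ) else u a / δ)
                = ∑ _a ∈ Finset.Ico 0 h, (1:ℝ) := Finset.sum_congr rfl
                    (fun a ha => if_pos (Finset.mem_Ico.mp ha).2)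
              _ = (h : ℝ) := by
                  rw [Finset.sum_const, Nat.card_Ico, nsmul_eq_mul, mul_one, Nat.sub_zero]
          · calc ∑ a ∈ Finset.Ico h M, (if a < h then (1:ℝ) else u a / δ)
                = ∑ a ∈ Finset.Ico h M, u a / δ := Finset.sum_congr rfl
                    (fun a ha => if_neg (not_lt.mpr (Finset.mem_Ico.mp ha).1))
              _ = (∑ a ∈ Finset.Ico h M, u a) / δ := (Finset.sum_div _ _ _).symm
        have h4 : ∑ i : Fin n, (if n - k ≤ (i : ℕ) then 1 - c i / δ else 0)
            = (k : ℝ) - (∑ a ∈ Finset.Ico (n - k) n, c a) / δ := by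
          rw [Fin.sum_univ_eq_sum_range (fun a => if n - k ≤ a then 1 - c a / δ else 0) n]
          rw [Finset.range_eq_Ico,
            ← Finset.sum_Ico_consecutive _ (Nat.zero_le (n - k)) (by omega : n - k ≤ n)]
          have hz : ∑ a ∈ Finset.Ico 0 (n - k),
              (if n - k ≤ a then 1 - c a / δ else 0) = 0 :=
            Finset.sum_eq_zero fun a ha => if_neg (not_le.mpr (Finset.mem_Ico.mp ha).2)
          rw [hz, zero_add]
          calc ∑ a ∈ Finset.Ico (n - k) n, (if n - k ≤ a then 1 - c a / δ else 0)
              = ∑ a ∈ Finset.Ico (n - k) n, (1 - c a / δ) := Finset.sum_congr rfl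
                  (fun a ha => if_pos (Finset.mem_Ico.mp ha).1)
            _ = (k : ℝ) - (∑ a ∈ Finset.Ico (n - k) n, c a) / δ := by
                rw [Finset.sum_sub_distrib, Finset.sum_const, Nat.card_Ico, nsmul_eq_mul,
                  mul_one, ← Finset.sum_div]
                have hkk2 : n - (n - k) = k := by omega
                rw [hkk2]
        have hTC : (∑ j ∈ Finset.Ico h M, u j) - (∑ a ∈ Finset.Ico (n - k) n, c a)
            = δ * ((n - h - k : ℕ) : ℝ) := by
          rw [hδ]
          field_simp
        have h5 : (∑ j ∈ Finset.Ico h M, u j) / δ -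
            (∑ a ∈ Finset.Ico (n - k) n, c a) / δ = ((n - h - k : ℕ) : ℝ) := by
          rw [← sub_div, hTC, mul_comm, mul_div_assoc, div_self hδpos.ne', mul_one]
        have hcast : (k : ℝ) + (h : ℝ) + ((n - h - k : ℕ) : ℝ) = (n : ℝ) := by
          have hnat : k + h + (n - h - k) = n := by omega
          exact_mod_cast hnat
        rw [h2, h3, h4] at h1
        linarith
      have hmain : (∏ i : Fin n, s i) ≤ ∏ i : Fin n, ρ i := by
        refine prod_le_prod_of_sum_div_le univ s ρ (fun i _ => hs_nonneg i)
          (fun i _ => hρpos i) ?_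
        rwa [Finset.card_univ, Fintype.card_fin]
      refine le_trans hmain ?_
      -- compare the product of rows with the stated bound
      have hKprod : ∏ i ∈ univ.filter (fun i : Fin n => n - k ≤ (i : ℕ)), ρ i
          = ∏ a ∈ Finset.Ico (n - k) n, c a := by
        have e1 : ∏ i ∈ univ.filter (fun i : Fin n => n - k ≤ (i : ℕ)), ρ i
            = ∏ i ∈ univ.filter (fun i : Fin n => n - k ≤ (i : ℕ)), c (i : ℕ) :=
          Finset.prod_congr rfl (fun i hi => by
            simp only [hρdef]; rw [if_pos (Finset.mem_filter.mp hi).2])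
        rw [e1, Finset.prod_filter]
        rw [Fin.prod_univ_eq_prod_range (fun a => if n - k ≤ a then c a else 1) n]
        rw [Finset.range_eq_Ico,
          ← Finset.prod_Ico_consecutive _ (Nat.zero_le (n - k)) (by omega : n - k ≤ n)]
        have hz : ∏ a ∈ Finset.Ico 0 (n - k), (if n - k ≤ a then c a else 1) = 1 :=
          Finset.prod_eq_one fun a ha => if_neg (not_le.mpr (Finset.mem_Ico.mp ha).2)
        rw [hz, one_mul]
        exact Finset.prod_congr rfl fun a ha => if_pos (Finset.mem_Ico.mp ha).1
      set Poor : Finset (Fin n) :=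
        (univ.filter (fun i : Fin n => ¬ (n - k ≤ (i : ℕ)))).filter
          (fun i => ¬ (Lg i).Nonempty) with hPoordef
      set J : Finset ℕ := H'.image φ with hJdef
      have hJcard : J.card = H'.card := Finset.card_image_of_injOn
        (fun a ha b hb hab => hφinj a (Finset.mem_coe.mp ha) b (Finset.mem_coe.mp hb) hab)
      have hJsub : J ⊆ Finset.range h := by
        intro j hj
        obtain ⟨i, hiH, rfl⟩ := Finset.mem_image.mp hj
        exact Finset.mem_range.mpr (hdom i hiH).1
      have hJh : J.card ≤ h := by
        have := Finset.card_le_card hJsub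
        rwa [Finset.card_range] at this
      have hNKcard : H'.card + Poor.card = n - k := by
        have hc1 : (univ.filter (fun i : Fin n => ¬ (n - k ≤ (i : ℕ)))).card = n - k := by
          have heq : (univ.filter (fun i : Fin n => ¬ (n - k ≤ (i : ℕ))))
              = univ.filter (fun i : Fin n => (i : ℕ) < n - k) := by
            apply Finset.filter_congr
            intro i _
            simp only [not_le]
          rw [heq, card_filter_val_lt n (n - k) (by omega)]
        rw [← hc1, hH'def, hPoordef]
        exact Finset.card_filter_add_card_filter_not _
      have hprodsplit : (∏ i : Fin n, ρ i) =
          (∏ a ∈ Finset.Ico (n - k) n, c a) * ((∏ j ∈ J, w j) * δ ^ Poor.card) := by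
        rw [← Finset.prod_filter_mul_prod_filter_not univ
          (fun i : Fin n => n - k ≤ (i : ℕ)) ρ, hKprod]
        congr 1
        rw [← Finset.prod_filter_mul_prod_filter_not
          (univ.filter (fun i : Fin n => ¬ (n - k ≤ (i : ℕ))))
          (fun i => (Lg i).Nonempty) ρ, ← hH'def, ← hPoordef]
        congr 1
        · have e2 : ∀ i ∈ H', ρ i = w (φ i) := by
            intro i hi
            have hm := (hH'mem i).mp hi
            simp only [hρdef]
            rw [if_neg (not_le.mpr hm.1), if_pos hm.2]
          rw [hJdef, Finset.prod_image (fun a ha b hb hab => hφinj a ha b hb hab)]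
          exact Finset.prod_congr rfl e2
        · have e3 : ∀ i ∈ Poor, ρ i = δ := by
            intro i hi
            obtain ⟨hi1, hi2⟩ := Finset.mem_filter.mp hi
            have hnk : ¬ (n - k ≤ (i : ℕ)) := (Finset.mem_filter.mp hi1).2
            simp only [hρdef]
            rw [if_neg hnk, if_neg hi2]
          rw [Finset.prod_congr rfl e3, Finset.prod_const]
      have hfinal : (∏ j ∈ J, w j) * δ ^ Poor.card ≤
          (∏ j ∈ Finset.range h, w j) * δ ^ (n - h - k) := by
        have hpc : Poor.card = (h - J.card) + (n - h - k) := by omega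
        rw [hpc, pow_add, ← mul_assoc]
        have hcardsd : (Finset.range h \ J).card = h - J.card := by
          rw [Finset.card_sdiff_of_subset hJsub, Finset.card_range]
        have hsd : δ ^ (h - J.card) ≤ ∏ j ∈ Finset.range h \ J, w j := by
          rw [← hcardsd, ← Finset.prod_const]
          refine Finset.prod_le_prod (fun j _ => hδ0) (fun j hj => ?_)
          exact (hwδ j (Finset.mem_range.mp (Finset.mem_sdiff.mp hj).1)).le
        have hJnonneg : (0:ℝ) ≤ ∏ j ∈ J, w j :=
          Finset.prod_nonneg fun j hj =>
            (lt_trans hδpos (hwδ j (Finset.mem_range.mp (hJsub hj)))).le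
        calc (∏ j ∈ J, w j) * δ ^ (h - J.card) * δ ^ (n - h - k)
            ≤ (∏ j ∈ J, w j) * (∏ j ∈ Finset.range h \ J, w j) * δ ^ (n - h - k) :=
              mul_le_mul_of_nonneg_right (mul_le_mul_of_nonneg_left hsd hJnonneg)
                (pow_nonneg hδ0 _)
          _ = (∏ j ∈ Finset.range h, w j) * δ ^ (n - h - k) := by
              rw [mul_comm (∏ j ∈ J, w j) (∏ j ∈ Finset.range h \ J, w j),
                Finset.prod_sdiff hJsub]
      have hCnonneg : 0 ≤ ∏ a ∈ Finset.Ico (n - k) n, c a :=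
        Finset.prod_nonneg fun a ha => (hc_pos a (Finset.mem_Ico.mp ha).2).le
      rw [hprodsplit]
      calc (∏ a ∈ Finset.Ico (n - k) n, c a) * ((∏ j ∈ J, w j) * δ ^ Poor.card)
          ≤ (∏ a ∈ Finset.Ico (n - k) n, c a) *
              ((∏ j ∈ Finset.range h, w j) * δ ^ (n - h - k)) :=
            mul_le_mul_of_nonneg_left hfinal hCnonneg
        _ = (∏ i ∈ Finset.range h, min (c i) (u i)) * δ ^ (n - h - k) *
              ∏ a ∈ Finset.Ico (n - k) n, c a := by
            simp only [hwdef]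
            ring
  have h1n : (0:ℝ) ≤ 1 / (n : ℝ) := by positivity
  exact Real.rpow_le_rpow (Finset.prod_nonneg fun i _ => hs_nonneg i) key h1n
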